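/- arXiv:2106.04877 — 3 statements merged into one kernel-verified Lean document; each statement's English description precedes it below -/
import Mathlib

section
/- For every nonnegative integer α, the half-space integral satisfies S(α, α+1) = (√(2π)/2)·(α+1)!, and for every integer α ≥ 1, S(α, α−1) = (√(2π)/2)·α!. -/
open MeasureTheory Real

/-- The probabilist's Hermite polynomial evaluated at a real number. -/
noncomputable def He (n : ℕ) (x : ℝ) : ℝ := Polynomial.aeval x (Polynomial.hermite n)

/-- The half-space Hermite-Gaussian integral `S(α,β)`. -/
noncomputable def S (a b : ℕ) : ℝ :=
  ∫ x in Set.Iic (0 : ℝ), x * He a x * He b x * Real.exp (-x ^ 2 / 2)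

section Aux

open Polynomial Set


noncomputable def Hp (n : ℕ) : Polynomial ℝ := (Polynomial.hermite n).map (algebraMap ℤ ℝ)

lemma Hp_succ (n : ℕ) : Hp (n + 1) = X * Hp n - derivative (Hp n) := by
  unfold Hp
  rw [hermite_succ, Polynomial.map_sub, Polynomial.map_mul, map_X, derivative_map]

lemma Hp_monic (n : ℕ) : (Hp n).Monic :=
  (hermite_monic n).map _

lemma Hp_natDegree (n : ℕ) : (Hp n).natDegree = n := by
  unfold Hp
  rw [natDegree_map_eq_of_injective (algebraMap ℤ ℝ).injective_int]
  exact natDegree_hermite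

lemma He_eq (n : ℕ) (x : ℝ) : Polynomial.aeval x (Polynomial.hermite n) = (Hp n).eval x := by
  rw [Polynomial.aeval_def, Polynomial.eval₂_eq_eval_map]; rfl

-- integrability of polynomial times gaussian
lemma integrable_poly_gauss (p : Polynomial ℝ) :
    Integrable fun x : ℝ => p.eval x * Real.exp (-(x ^ 2 / 2)) := by
  induction p using Polynomial.induction_on' with
  | add p q hp hq => simpa [add_mul] using (show Integrable (fun x => p.eval x * Real.exp (-(x ^ 2 / 2)) + q.eval x * Real.exp (-(x ^ 2 / 2))) from hp.add hq)
  | monomial k a =>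
    have h : Integrable fun x : ℝ => x ^ k * Real.exp (-(1/2 : ℝ) * x ^ 2) := by
      have := integrable_rpow_mul_exp_neg_mul_sq (b := 1/2) (by norm_num)
        (s := (k : ℝ)) (by exact lt_of_lt_of_le neg_one_lt_zero (Nat.cast_nonneg k))
      simpa [Real.rpow_natCast] using this
    have h2 := h.const_mul a
    simp only [eval_monomial]
    have e : (fun x : ℝ => a * x ^ k * Real.exp (-(x ^ 2 / 2)))
        = fun x : ℝ => a * (x ^ k * Real.exp (-(1/2 : ℝ) * x ^ 2)) := by
      funext x
      rw [show -(x ^ 2 / 2) = -(1/2 : ℝ) * x ^ 2 by ring]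
      ring
    rw [e]
    exact h2

lemma hasDerivAt_gauss (y : ℝ) :
    HasDerivAt (fun t : ℝ => Real.exp (-(t ^ 2 / 2))) (-y * Real.exp (-(y ^ 2 / 2))) y := by
  have h1 : HasDerivAt (fun t : ℝ => -(t ^ 2 / 2)) (-y) y := by
    have := ((hasDerivAt_pow 2 y).div_const 2).neg
    refine this.congr_deriv ?_
    norm_num
  have := h1.exp
  convert this using 1
  ring

lemma hasDerivAt_Hg (n : ℕ) (y : ℝ) :
    HasDerivAt (fun t : ℝ => -((Hp n).eval t * Real.exp (-(t ^ 2 / 2))))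
      ((Hp (n + 1)).eval y * Real.exp (-(y ^ 2 / 2))) y := by
  have hP : HasDerivAt (fun t : ℝ => (Hp n).eval t) ((derivative (Hp n)).eval y) y :=
    Polynomial.hasDerivAt _ _
  have := (hP.mul (hasDerivAt_gauss y)).neg
  refine this.congr_deriv ?_
  rw [Hp_succ]
  simp only [eval_sub, eval_mul, eval_X]
  ring

lemma ibp_step (p : Polynomial ℝ) (n : ℕ) :
    ∫ x : ℝ, p.eval x * ((Hp (n + 1)).eval x * Real.exp (-(x ^ 2 / 2))) =
    ∫ x : ℝ, (derivative p).eval x * ((Hp n).eval x * Real.exp (-(x ^ 2 / 2))) := by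
  have key := integral_mul_deriv_eq_deriv_mul_of_integrable
    (u := fun x : ℝ => p.eval x) (u' := fun x : ℝ => (derivative p).eval x)
    (v := fun x : ℝ => -((Hp n).eval x * Real.exp (-(x ^ 2 / 2))))
    (v' := fun x : ℝ => (Hp (n + 1)).eval x * Real.exp (-(x ^ 2 / 2)))
    (fun x _ => Polynomial.hasDerivAt p x) (fun x _ => hasDerivAt_Hg n x)
    ?_ ?_ ?_
  · rw [key]
    rw [← integral_neg]
    congr 1
    funext x
    ring
  · have := integrable_poly_gauss (p * Hp (n + 1))
    apply this.congr
    filter_upwards with x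
    simp [eval_mul]; ring
  · have := (integrable_poly_gauss (derivative p * Hp n)).neg
    apply this.congr
    filter_upwards with x
    simp [eval_mul]; ring
  · have := (integrable_poly_gauss (p * Hp n)).neg
    apply this.congr
    filter_upwards with x
    simp [eval_mul]; ring

lemma ibp_iter (n : ℕ) : ∀ p : Polynomial ℝ,
    ∫ x : ℝ, p.eval x * ((Hp n).eval x * Real.exp (-(x ^ 2 / 2))) =
    ∫ x : ℝ, (derivative^[n] p).eval x * Real.exp (-(x ^ 2 / 2)) := by
  induction n with
  | zero =>
    intro p
    simp [Hp, hermite_zero]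
  | succ n ih =>
    intro p
    rw [ibp_step p n, ih (derivative p), Function.iterate_succ_apply]

lemma gauss_int : ∫ x : ℝ, Real.exp (-(x ^ 2 / 2)) = Real.sqrt (2 * π) := by
  have := integral_gaussian (1/2)
  rw [show π / (1/2 : ℝ) = 2 * π by ring] at this
  rw [← this]
  congr 1
  funext x
  congr 1
  ring

lemma full_line (m : ℕ) :
    ∫ x : ℝ, (X * Hp m).eval x * ((Hp (m + 1)).eval x * Real.exp (-(x ^ 2 / 2))) =
      Real.sqrt (2 * π) * (m + 1).factorial := by
  rw [ibp_iter (m + 1) (X * Hp m)]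
  have hmonic : (X * Hp m).Monic := (monic_X).mul (Hp_monic m)
  have hdeg : (X * Hp m).natDegree = m + 1 := by
    rw [(monic_X).natDegree_mul (Hp_monic m), natDegree_X, Hp_natDegree]
    omega
  have hconst : derivative^[m + 1] (X * Hp m) = C ((m + 1).factorial : ℝ) := by
    have h0 : (derivative^[m + 1] (X * Hp m)).natDegree = 0 := by
      have := natDegree_iterate_derivative (X * Hp m) (m + 1)
      omega
    have hc : (derivative^[m + 1] (X * Hp m)).coeff 0 = ((m + 1).factorial : ℝ) := by
      rw [coeff_iterate_derivative]
      simp only [zero_add, Nat.descFactorial_self]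
      rw [← hdeg, hmonic.coeff_natDegree]
      simp
    rw [Polynomial.eq_C_of_natDegree_eq_zero h0, hc]
  rw [hconst]
  simp only [eval_C]
  rw [integral_const_mul, gauss_int]
  ring

lemma Hp_neg (n : ℕ) (x : ℝ) : (Hp n).eval (-x) = (-1) ^ n * (Hp n).eval x := by
  have hdeg : (Hp n).natDegree = n := Hp_natDegree n
  rw [Polynomial.eval_eq_sum_range, Polynomial.eval_eq_sum_range, hdeg, Finset.mul_sum]
  refine Finset.sum_congr rfl fun i _ => ?_
  by_cases hc : (Polynomial.hermite n).coeff i = 0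
  · simp [Hp, Polynomial.coeff_map, hc]
  · have heven : Even (n + i) := by
      by_contra hodd
      exact hc (coeff_hermite_of_odd_add (Nat.not_even_iff_odd.mp hodd))
    have hpow : (-1 : ℝ) ^ i = (-1) ^ n := by
      rcases Nat.even_or_odd n with hn | hn
      · have hi : Even i := (Nat.even_add.mp heven).mp hn
        rw [hi.neg_one_pow, hn.neg_one_pow]
      · have hi : Odd i := by
          rcases Nat.even_or_odd i with hi | hi
          · exact absurd ((Nat.even_add.mp heven).mpr hi) (Nat.not_even_iff_odd.mpr hn)
          · exact hi
        rw [hi.neg_one_pow, hn.neg_one_pow]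
    rw [neg_pow]
    rw [hpow]
    ring

lemma Iic_half (f : ℝ → ℝ) (hf : Integrable f) (heven : ∀ x, f (-x) = f x) :
    ∫ x in Set.Iic (0 : ℝ), f x = (∫ x : ℝ, f x) / 2 := by
  have h1 : ∫ x in Set.Iic (0 : ℝ), f x = ∫ x in Set.Ioi (0 : ℝ), f x := by
    have := integral_comp_neg_Iic (c := (0 : ℝ)) f
    rw [neg_zero] at this
    rw [← this]
    refine setIntegral_congr_fun measurableSet_Iic fun x _ => (heven x).symm
  have h2 : (∫ x : ℝ, f x) = (∫ x in Set.Iic (0 : ℝ), f x) + ∫ x in Set.Ioi (0 : ℝ), f x :=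
    (intervalIntegral.integral_Iic_add_Ioi hf.integrableOn hf.integrableOn).symm
  linarith [h1, h2]

lemma core (m : ℕ) :
    ∫ x in Set.Iic (0 : ℝ), x * He m x * He (m + 1) x * Real.exp (-x ^ 2 / 2) =
      Real.sqrt (2 * π) / 2 * (m + 1).factorial := by
  have hfun : (fun x : ℝ => x * He m x * He (m + 1) x * Real.exp (-x ^ 2 / 2))
      = fun x : ℝ => (X * Hp m).eval x * ((Hp (m + 1)).eval x * Real.exp (-(x ^ 2 / 2))) := by
    funext x
    rw [show (-x ^ 2 / 2 : ℝ) = -(x ^ 2 / 2) by ring]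
    unfold He
    rw [He_eq, He_eq, eval_mul, eval_X]
    ring
  rw [hfun]
  have hint : Integrable fun x : ℝ =>
      (X * Hp m).eval x * ((Hp (m + 1)).eval x * Real.exp (-(x ^ 2 / 2))) := by
    have := integrable_poly_gauss (X * Hp m * Hp (m + 1))
    apply this.congr
    filter_upwards with x
    simp only [eval_mul]
    ring
  have heven : ∀ x : ℝ, (X * Hp m).eval (-x) * ((Hp (m + 1)).eval (-x) *
      Real.exp (-((-x) ^ 2 / 2))) =
      (X * Hp m).eval x * ((Hp (m + 1)).eval x * Real.exp (-(x ^ 2 / 2))) := by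
    intro x
    rw [show ((-x : ℝ) ^ 2) = x ^ 2 by ring]
    simp only [eval_mul, eval_X, Hp_neg]
    rw [pow_succ]
    have hsq : ((-1 : ℝ) ^ m) * ((-1 : ℝ) ^ m) = 1 := by
      rw [← pow_add, ← two_mul]
      exact (even_two_mul m).neg_one_pow
    generalize Real.exp (-(x ^ 2 / 2)) = E
    linear_combination (x * (Hp m).eval x * ((Hp (m + 1)).eval x * E)) * hsq
  rw [Iic_half _ hint heven, full_line m]
  ring


end Aux

theorem S_succ_and_pred :
    (∀ α : ℕ, S α (α + 1) = Real.sqrt (2 * π) / 2 * (α + 1).factorial) ∧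
    (∀ α : ℕ, 1 ≤ α → S α (α - 1) = Real.sqrt (2 * π) / 2 * α.factorial) := by
  constructor
  · intro α
    unfold S
    exact core α
  · intro α hα
    obtain ⟨β, rfl⟩ : ∃ β, α = β + 1 := ⟨α - 1, by omega⟩
    simp only [Nat.add_sub_cancel]
    have hcomm : S (β + 1) β = S β (β + 1) := by
      unfold S
      congr 1
      funext x
      ring
    rw [hcomm]
    exact core β
end

section
/- Let n ≥ 1 be an integer and let x ∈ ℝ^{2n} be a nonzero vector. Define the polynomials f_o(ξ) = Σ_{i=1}^n x_{2i−1}·He_{2i}(ξ) and f_e(ξ) = Σ_{i=1}^n x_{2i}·He_{2i−2}(ξ). Then ∫_{-∞}^0 ξ·(f_e(ξ)² + f_o(ξ)²)·e^{-ξ²/2} dξ + (∫_{-∞}^0 ξ·f_o(ξ)·e^{-ξ²/2} dξ)² < 0. Equivalently, the symmetric matrix T^b ∈ ℝ^{2n×2n} with entries t^b_{2k,2l} = S(2k−2, 2l−2) and t^b_{2k−1,2l−1} = S(2k, 2l) − S(2k,0)·S(0,2l)/S(0,0) (all other entries zero) is negative definite. -/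
open MeasureTheory Real Matrix

/-- The boundary matrix `T^b` of the temperature jump problem: in one-based
indexing, `t^b_{2k,2l} = S(2k-2,2l-2)` and
`t^b_{2k-1,2l-1} = S(2k,2l) - S(2k,0)·S(0,2l)/S(0,0)`, other entries zero.
Here indices are zero-based, so one-based `2k` corresponds to odd `i`
with `2k-2 = i-1`, and one-based `2k-1` to even `i` with `2k = i+2`. -/
noncomputable def Tb (n : ℕ) : Matrix (Fin (2 * n)) (Fin (2 * n)) ℝ :=
  Matrix.of fun i j =>
    if i.val % 2 = 1 ∧ j.val % 2 = 1 then S (i.val - 1) (j.val - 1)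
    else if i.val % 2 = 0 ∧ j.val % 2 = 0 then
      S (i.val + 2) (j.val + 2) - S (i.val + 2) 0 * S 0 (j.val + 2) / S 0 0
    else 0

open Set Polynomial Filter




noncomputable def hermR (n : ℕ) : Polynomial ℝ := (Polynomial.hermite n).map (Int.castRingHom ℝ)

lemma He_zero (t : ℝ) : He 0 t = 1 := by simp [He, Polynomial.hermite_zero]

lemma He_eq_s10 (n : ℕ) (t : ℝ) : He n t = Polynomial.aeval t (hermR n) := by
  simp [He, hermR, Polynomial.aeval_map_algebraMap, Polynomial.aeval_def, Polynomial.eval₂_map]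


lemma coeff_hermR_of_lt {n k : ℕ} (h : n < k) : (hermR n).coeff k = 0 := by
  simp [hermR, Polynomial.coeff_map, Polynomial.coeff_hermite_of_lt h]

lemma coeff_hermR_self (n : ℕ) : (hermR n).coeff n = 1 := by
  simp [hermR, Polynomial.coeff_map, Polynomial.coeff_hermite_self]

lemma int_pow_gauss (k : ℕ) : Integrable (fun t : ℝ => t ^ k * Real.exp (-t ^ 2 / 2)) := by
  have h := integrable_rpow_mul_exp_neg_mul_sq (b := 1/2) (by norm_num) (s := (k : ℝ))
    (neg_one_lt_zero.trans_le (Nat.cast_nonneg k))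
  simp only [Real.rpow_natCast] at h
  convert h using 2 with t
  ring_nf

lemma int_poly_gauss (P : Polynomial ℝ) :
    Integrable (fun t : ℝ => Polynomial.aeval t P * Real.exp (-t ^ 2 / 2)) := by
  have : (fun t : ℝ => Polynomial.aeval t P * Real.exp (-t ^ 2 / 2)) =
      fun t => ∑ i ∈ Finset.range (P.natDegree + 1),
        P.coeff i * (t ^ i * Real.exp (-t ^ 2 / 2)) := by
    funext t
    rw [Polynomial.aeval_eq_sum_range, Finset.sum_mul]
    simp [mul_assoc]
  rw [this]
  exact integrable_finset_sum _ fun i _ => (int_pow_gauss i).const_mul _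

lemma intOn_poly (P : Polynomial ℝ) :
    IntegrableOn (fun t : ℝ => Polynomial.aeval t P * Real.exp (-t ^ 2 / 2)) (Set.Iic 0) :=
  (int_poly_gauss P).integrableOn

lemma intOn_he (a b : ℕ) :
    IntegrableOn (fun t : ℝ => t * He a t * He b t * Real.exp (-t ^ 2 / 2)) (Set.Iic 0) := by
  have h := intOn_poly (X * hermR a * hermR b)
  simp only [_root_.map_mul, Polynomial.aeval_X] at h
  simpa only [He_eq_s10] using h

lemma intOn_id_gauss : IntegrableOn (fun t : ℝ => t * Real.exp (-t ^ 2 / 2)) (Set.Iic 0) := by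
  have h := intOn_poly X
  simpa only [Polynomial.aeval_X] using h

lemma int_id_gauss : ∫ t in Set.Iic (0:ℝ), t * Real.exp (-t ^ 2 / 2) = -1 := by
  have hderiv : ∀ t : ℝ, HasDerivAt (fun s : ℝ => -Real.exp (-s ^ 2 / 2))
      (t * Real.exp (-t ^ 2 / 2)) t := by
    intro t
    have h1 : HasDerivAt (fun s : ℝ => -s ^ 2 / 2) (-t) t := by
      have := ((hasDerivAt_pow 2 t).neg.div_const 2)
      refine this.congr_deriv ?_
      norm_num; ring
    have := (h1.exp).neg
    refine this.congr_deriv ?_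
    ring
  have htend : Filter.Tendsto (fun s : ℝ => -Real.exp (-s ^ 2 / 2)) Filter.atBot (nhds 0) := by
    have h2 : Filter.Tendsto (fun s : ℝ => s ^ 2) Filter.atBot Filter.atTop := by
      have := (Filter.tendsto_pow_atTop (n := 2) two_ne_zero).comp
        (Filter.tendsto_neg_atBot_atTop (G := ℝ))
      simpa [Function.comp_def, neg_sq] using this
    have h3 := Filter.tendsto_neg_atTop_atBot.comp h2
    have h4 := h3.atBot_div_const (by norm_num : (0:ℝ) < 2)
    have h5 : Filter.Tendsto (fun s : ℝ => -s ^ 2 / 2) Filter.atBot Filter.atBot := by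
      simpa [Function.comp_def] using h4
    simpa using (Real.tendsto_exp_atBot.comp h5).neg
  have key := integral_Iic_of_hasDerivAt_of_tendsto (a := (0:ℝ)) (m := 0)
    ((Real.continuous_exp.comp (by continuity)).neg.continuousWithinAt)
    (fun t _ => hderiv t) intOn_id_gauss htend
  rw [key]; simp

lemma S00 : S 0 0 = -1 := by
  have h : ∀ t : ℝ, t * He 0 t * He 0 t * Real.exp (-t ^ 2 / 2)
      = t * Real.exp (-t ^ 2 / 2) := by
    intro t; simp [He_zero]
  simp only [S, h]
  exact int_id_gauss

lemma N_nonpos (P : Polynomial ℝ) :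
    ∫ t in Set.Iic (0:ℝ), t * (Polynomial.aeval t P) ^ 2 * Real.exp (-t ^ 2 / 2) ≤ 0 := by
  apply setIntegral_nonpos measurableSet_Iic
  intro t ht
  have h1 := Real.exp_pos (-t ^ 2 / 2)
  have h2 := sq_nonneg (Polynomial.aeval t P)
  have h3 : t ≤ 0 := ht
  have h4 : t * (Polynomial.aeval t P) ^ 2 ≤ 0 :=
    mul_nonpos_iff.mpr (Or.inr ⟨h3, h2⟩)
  exact mul_nonpos_iff.mpr (Or.inr ⟨h4, h1.le⟩)

lemma intOn_sq (P : Polynomial ℝ) :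
    IntegrableOn (fun t : ℝ => t * (Polynomial.aeval t P) ^ 2 * Real.exp (-t ^ 2 / 2))
      (Set.Iic 0) := by
  have h := intOn_poly (X * P ^ 2)
  simp only [_root_.map_mul, map_pow, Polynomial.aeval_X] at h
  exact h

lemma N_neg (P : Polynomial ℝ) (hP : P ≠ 0) :
    ∫ t in Set.Iic (0:ℝ), t * (Polynomial.aeval t P) ^ 2 * Real.exp (-t ^ 2 / 2) < 0 := by
  have hfin := Polynomial.finite_setOf_isRoot hP
  have hsub : ¬ (Set.Iio (0:ℝ) ⊆ {x | P.IsRoot x}) := fun hsub =>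
    (Set.Iio_infinite (0:ℝ)) (hfin.subset hsub)
  obtain ⟨x₀, hx₀, hroot⟩ := Set.not_subset.mp hsub
  set f : ℝ → ℝ := fun t => -(t * (Polynomial.aeval t P) ^ 2 * Real.exp (-t ^ 2 / 2)) with hf
  have hcont : Continuous f := by
    apply Continuous.neg
    exact (continuous_id.mul ((P.continuous_aeval).pow 2)).mul (by continuity)
  have hpos : 0 < ∫ t in Set.Iic (0:ℝ), f t := by
    rw [setIntegral_pos_iff_support_of_nonneg_ae]
    · have hU : IsOpen ({t : ℝ | 0 < f t} ∩ Set.Iio 0) :=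
        (isOpen_lt continuous_const hcont).inter isOpen_Iio
      have hx₀U : x₀ ∈ {t : ℝ | 0 < f t} ∩ Set.Iio 0 := by
        refine ⟨?_, hx₀⟩
        have ht : x₀ < 0 := hx₀
        have hev : Polynomial.aeval x₀ P ≠ 0 := by
          simpa [Polynomial.IsRoot, Polynomial.aeval_def, Polynomial.eval₂_eq_eval_map] using hroot
        have h2 : 0 < (Polynomial.aeval x₀ P) ^ 2 := by positivity
        have h1 := Real.exp_pos (-x₀ ^ 2 / 2)
        simp only [hf, Set.mem_setOf_eq]
        have h5 : x₀ * ((Polynomial.aeval x₀ P) ^ 2 * Real.exp (-x₀ ^ 2 / 2)) < 0 :=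
          mul_neg_of_neg_of_pos ht (mul_pos h2 h1)
        nlinarith [h5]
      have hm := hU.measure_pos volume ⟨x₀, hx₀U⟩
      refine lt_of_lt_of_le hm (measure_mono ?_)
      intro t ht
      exact ⟨(show (0:ℝ) < f t from ht.1).ne', Set.mem_Iic.mpr ht.2.le⟩
    · filter_upwards [ae_restrict_mem measurableSet_Iic] with t ht
      have h1 := Real.exp_pos (-t ^ 2 / 2)
      have h2 := sq_nonneg (Polynomial.aeval t P)
      have h3 : t ≤ 0 := ht
      simp only [hf, Pi.zero_apply, neg_nonneg]
      have h4 : t * (Polynomial.aeval t P) ^ 2 ≤ 0 :=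
        mul_nonpos_iff.mpr (Or.inr ⟨h3, h2⟩)
      exact mul_nonpos_iff.mpr (Or.inr ⟨h4, h1.le⟩)
    · exact (intOn_sq P).neg
  have hneg : 0 < - ∫ t in Set.Iic (0:ℝ),
      t * (Polynomial.aeval t P) ^ 2 * Real.exp (-t ^ 2 / 2) := by
    rw [← integral_neg]
    exact hpos
  linarith

lemma coeff_comb {m : ℕ} (c : Fin m → ℝ) (d : Fin m → ℕ) (hd : StrictMono d) (i : Fin m)
    (hmax : ∀ j, i < j → c j = 0) :
    (∑ j, Polynomial.C (c j) * hermR (d j)).coeff (d i) = c i := by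
  rw [Polynomial.finset_sum_coeff]
  rw [Finset.sum_eq_single i]
  · simp [Polynomial.coeff_C_mul, coeff_hermR_self]
  · intro j _ hj
    rcases lt_or_gt_of_ne hj with h | h
    · rw [Polynomial.coeff_C_mul, coeff_hermR_of_lt (hd h), mul_zero]
    · rw [hmax j h, Polynomial.C_0, zero_mul, Polynomial.coeff_zero]
  · simp

lemma exists_max_nonzero {m : ℕ} {c : Fin m → ℝ} (h : ∃ i, c i ≠ 0) :
    ∃ i, c i ≠ 0 ∧ ∀ j, i < j → c j = 0 := by
  classical
  set s := Finset.univ.filter fun i => c i ≠ 0 with hs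
  have hne : s.Nonempty := by
    obtain ⟨i, hi⟩ := h
    exact ⟨i, by simp [hs, hi]⟩
  refine ⟨s.max' hne, (Finset.mem_filter.mp (s.max'_mem hne)).2, fun j hj => ?_⟩
  by_contra hcj
  exact absurd (Finset.le_max' s j (by simp [hs, hcj])) (not_le.mpr hj)

lemma comb_ne_zero {m : ℕ} (c : Fin m → ℝ) (d : Fin m → ℕ) (hd : StrictMono d)
    (h : ∃ i, c i ≠ 0) : (∑ j, Polynomial.C (c j) * hermR (d j)) ≠ 0 := by
  obtain ⟨i, hci, hmax⟩ := exists_max_nonzero h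
  intro h0
  have := coeff_comb c d hd i hmax
  rw [h0, Polynomial.coeff_zero] at this
  exact hci this.symm

lemma expand_int {m₁ m₂ : ℕ} (a : Fin m₁ → ℝ) (d : Fin m₁ → ℕ) (b : Fin m₂ → ℝ)
    (e : Fin m₂ → ℕ) :
    ∫ t in Set.Iic (0:ℝ),
        t * (∑ i, a i * He (d i) t) * (∑ j, b j * He (e j) t) * Real.exp (-t ^ 2 / 2)
      = ∑ i, ∑ j, a i * b j * S (d i) (e j) := by
  have h1 : ∀ t : ℝ, t * (∑ i, a i * He (d i) t) * (∑ j, b j * He (e j) t)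
        * Real.exp (-t ^ 2 / 2)
      = ∑ i, ∑ j, a i * b j * (t * He (d i) t * He (e j) t * Real.exp (-t ^ 2 / 2)) := by
    intro t
    have e1 : t * (∑ i, a i * He (d i) t) * (∑ j, b j * He (e j) t) * Real.exp (-t ^ 2 / 2)
        = (∑ i, a i * He (d i) t) * (∑ j, b j * He (e j) t) * (t * Real.exp (-t ^ 2 / 2)) := by
      ring
    rw [e1, Finset.sum_mul_sum, Finset.sum_mul]
    refine Finset.sum_congr rfl fun i _ => ?_
    rw [Finset.sum_mul]
    exact Finset.sum_congr rfl fun j _ => by ring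
  simp only [h1]
  rw [integral_finset_sum]
  · refine Finset.sum_congr rfl fun i _ => ?_
    rw [integral_finset_sum]
    · exact Finset.sum_congr rfl fun j _ => by rw [MeasureTheory.integral_const_mul]; rfl
    · exact fun j _ => (intOn_he (d i) (e j)).const_mul _
  · exact fun i _ => integrable_finset_sum _ fun j _ => (intOn_he (d i) (e j)).const_mul _

lemma expand_int1 {m : ℕ} (a : Fin m → ℝ) (d : Fin m → ℕ) :
    ∫ t in Set.Iic (0:ℝ), t * (∑ i, a i * He (d i) t) * Real.exp (-t ^ 2 / 2)
      = ∑ i, a i * S (d i) 0 := by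
  have h1 : ∀ t : ℝ, t * (∑ i, a i * He (d i) t) * Real.exp (-t ^ 2 / 2)
      = ∑ i, a i * (t * He (d i) t * He 0 t * Real.exp (-t ^ 2 / 2)) := by
    intro t
    simp only [Finset.mul_sum, Finset.sum_mul, He_zero]
    exact Finset.sum_congr rfl fun i _ => by ring
  simp only [h1]
  rw [integral_finset_sum]
  · exact Finset.sum_congr rfl fun i _ => by rw [MeasureTheory.integral_const_mul]; rfl
  · exact fun i _ => (intOn_he (d i) 0).const_mul _

lemma S_symm (a b : ℕ) : S a b = S b a := by
  unfold S
  congr 1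
  funext t
  ring


lemma sum_range_parity (f : ℕ → ℝ) (n : ℕ) :
    ∑ i ∈ Finset.range (2 * n), f i
      = ∑ i ∈ Finset.range n, f (2 * i) + ∑ i ∈ Finset.range n, f (2 * i + 1) := by
  induction n with
  | zero => simp
  | succ m ih =>
    have h2 : 2 * (m + 1) = (2 * m + 1) + 1 := by ring
    rw [h2, Finset.sum_range_succ, Finset.sum_range_succ, Finset.sum_range_succ,
      Finset.sum_range_succ, ih]
    ring

lemma fin_sum_parity (n : ℕ) (F : Fin (2 * n) → ℝ) :
    ∑ i, F i = (∑ i : Fin n, F ⟨2 * i.val, by omega⟩)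
      + ∑ i : Fin n, F ⟨2 * i.val + 1, by omega⟩ := by
  classical
  set f : ℕ → ℝ := fun k => if h : k < 2 * n then F ⟨k, h⟩ else 0 with hf
  have h1 : ∑ i, F i = ∑ i ∈ Finset.range (2 * n), f i := by
    rw [← Fin.sum_univ_eq_sum_range]
    exact Finset.sum_congr rfl fun i _ => by simp [hf, i.isLt]
  have h2 : ∑ i : Fin n, F ⟨2 * i.val, by omega⟩ = ∑ i ∈ Finset.range n, f (2 * i) := by
    rw [← Fin.sum_univ_eq_sum_range (fun i => f (2 * i))]
    refine Finset.sum_congr rfl fun i _ => ?_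
    have hlt : 2 * i.val < 2 * n := by omega
    simp [hf, hlt]
  have h3 : ∑ i : Fin n, F ⟨2 * i.val + 1, by omega⟩
      = ∑ i ∈ Finset.range n, f (2 * i + 1) := by
    rw [← Fin.sum_univ_eq_sum_range (fun i => f (2 * i + 1))]
    refine Finset.sum_congr rfl fun i _ => ?_
    have hlt : 2 * i.val + 1 < 2 * n := by omega
    simp [hf, hlt]
  rw [h1, h2, h3, sum_range_parity]

theorem Tb_negdef (n : ℕ) (hn : 1 ≤ n) (x : Fin (2 * n) → ℝ) (hx : x ≠ 0) :
    ((∫ ξ in Set.Iic (0 : ℝ),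
        ξ * ((∑ i : Fin n, x ⟨2 * i.val + 1, by have := i.isLt; omega⟩ * He (2 * i.val) ξ) ^ 2 +
             (∑ i : Fin n, x ⟨2 * i.val, by have := i.isLt; omega⟩ * He (2 * (i.val + 1)) ξ) ^ 2) *
          Real.exp (-ξ ^ 2 / 2)) +
      (∫ ξ in Set.Iic (0 : ℝ),
        ξ * (∑ i : Fin n, x ⟨2 * i.val, by have := i.isLt; omega⟩ * He (2 * (i.val + 1)) ξ) *
          Real.exp (-ξ ^ 2 / 2)) ^ 2 < 0) ∧
    x ⬝ᵥ (Tb n) *ᵥ x < 0 := by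
  -- coefficient functions
  set A : Fin n → ℝ := fun i => x ⟨2 * i.val + 1, by have := i.isLt; omega⟩ with hA
  set B : Fin n → ℝ := fun i => x ⟨2 * i.val, by have := i.isLt; omega⟩ with hB
  set dA : Fin n → ℕ := fun i => 2 * i.val with hdA
  set dB : Fin n → ℕ := fun i => 2 * (i.val + 1) with hdB
  have hdAmono : StrictMono dA := fun i j hij => by
    have : i.val < j.val := hij
    simp only [hdA]; omega
  have hdBmono : StrictMono dB := fun i j hij => by
    have : i.val < j.val := hij
    simp only [hdB]; omega
  set G : Polynomial ℝ := ∑ i : Fin n, Polynomial.C (A i) * hermR (dA i) with hG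
  set H : Polynomial ℝ := ∑ i : Fin n, Polynomial.C (B i) * hermR (dB i) with hH
  have hg : ∀ t : ℝ, ∑ i : Fin n, A i * He (dA i) t = Polynomial.aeval t G := by
    intro t
    rw [hG, map_sum]
    exact Finset.sum_congr rfl fun i _ => by rw [_root_.map_mul, Polynomial.aeval_C, Algebra.algebraMap_self_apply, He_eq_s10]
  have hh : ∀ t : ℝ, ∑ i : Fin n, B i * He (dB i) t = Polynomial.aeval t H := by
    intro t
    rw [hH, map_sum]
    exact Finset.sum_congr rfl fun i _ => by rw [_root_.map_mul, Polynomial.aeval_C, Algebra.algebraMap_self_apply, He_eq_s10]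
  set J : ℝ := ∫ ξ in Set.Iic (0 : ℝ),
      ξ * (∑ i : Fin n, B i * He (dB i) ξ) * Real.exp (-ξ ^ 2 / 2) with hJ
  set Q : Polynomial ℝ := H + Polynomial.C J with hQdef
  have hQev : ∀ t : ℝ, Polynomial.aeval t Q = Polynomial.aeval t H + J := by
    intro t; rw [hQdef, map_add, Polynomial.aeval_C, Algebra.algebraMap_self_apply]
  set NG : ℝ := ∫ t in Set.Iic (0:ℝ),
      t * (Polynomial.aeval t G) ^ 2 * Real.exp (-t ^ 2 / 2) with hNG
  set NH : ℝ := ∫ t in Set.Iic (0:ℝ),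
      t * (Polynomial.aeval t H) ^ 2 * Real.exp (-t ^ 2 / 2) with hNH
  set NQ : ℝ := ∫ t in Set.Iic (0:ℝ),
      t * (Polynomial.aeval t Q) ^ 2 * Real.exp (-t ^ 2 / 2) with hNQ
  -- integrability of the cross term
  have hXH : IntegrableOn (fun t : ℝ => t * Polynomial.aeval t H * Real.exp (-t ^ 2 / 2))
      (Set.Iic 0) := by
    have h := intOn_poly (X * H)
    simp only [_root_.map_mul, Polynomial.aeval_X] at h
    exact h
  -- the first integral splits
  have h_split : (∫ ξ in Set.Iic (0 : ℝ),
      ξ * ((∑ i : Fin n, A i * He (dA i) ξ) ^ 2 +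
           (∑ i : Fin n, B i * He (dB i) ξ) ^ 2) * Real.exp (-ξ ^ 2 / 2)) = NG + NH := by
    have hfun : (fun ξ : ℝ => ξ * ((∑ i : Fin n, A i * He (dA i) ξ) ^ 2 +
           (∑ i : Fin n, B i * He (dB i) ξ) ^ 2) * Real.exp (-ξ ^ 2 / 2))
        = fun t => (t * (Polynomial.aeval t G) ^ 2 * Real.exp (-t ^ 2 / 2))
            + (t * (Polynomial.aeval t H) ^ 2 * Real.exp (-t ^ 2 / 2)) := by
      funext t
      rw [hg t, hh t]; ring
    rw [hfun, integral_add (intOn_sq G) (intOn_sq H)]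
  -- J as integral against aeval H
  have hJint : (∫ t in Set.Iic (0:ℝ),
      t * Polynomial.aeval t H * Real.exp (-t ^ 2 / 2)) = J := by
    rw [hJ]
    congr 1
    funext t
    rw [hh t]
  -- key identity : NQ = NH + J ^ 2
  have hNQ_eq : NQ = NH + J ^ 2 := by
    have hfun : (fun t : ℝ => t * (Polynomial.aeval t Q) ^ 2 * Real.exp (-t ^ 2 / 2))
        = fun t => (t * (Polynomial.aeval t H) ^ 2 * Real.exp (-t ^ 2 / 2)
            + (2 * J) * (t * Polynomial.aeval t H * Real.exp (-t ^ 2 / 2)))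
            + (J ^ 2) * (t * Real.exp (-t ^ 2 / 2)) := by
      funext t
      rw [hQev t]; ring
    have hi2 : IntegrableOn (fun t : ℝ => t * (Polynomial.aeval t H) ^ 2 * Real.exp (-t ^ 2 / 2)
        + (2 * J) * (t * Polynomial.aeval t H * Real.exp (-t ^ 2 / 2))) (Set.Iic 0) :=
      (intOn_sq H).add (hXH.const_mul _)
    have hi3 : IntegrableOn (fun t : ℝ => (J ^ 2) * (t * Real.exp (-t ^ 2 / 2))) (Set.Iic 0) :=
      intOn_id_gauss.const_mul _
    rw [hNQ, hfun, integral_add hi2 hi3, integral_add (intOn_sq H) (hXH.const_mul _),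
      MeasureTheory.integral_const_mul, MeasureTheory.integral_const_mul, hJint, int_id_gauss]
    ring
  -- main strict inequality
  have hkey : NG + NQ < 0 := by
    by_cases hBex : ∃ i, B i ≠ 0
    · -- the even part is nonzero : Q ≠ 0
      obtain ⟨i₀, hi₀, hmax⟩ := exists_max_nonzero hBex
      have hcH := coeff_comb B dB hdBmono i₀ hmax
      have hcQ : Q.coeff (dB i₀) = B i₀ := by
        rw [hQdef, Polynomial.coeff_add, hcH, Polynomial.coeff_C,
          if_neg (by simp [hdB]), add_zero]
      have hQne : Q ≠ 0 := by
        intro h0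
        rw [h0, Polynomial.coeff_zero] at hcQ
        exact hi₀ hcQ.symm
      have := N_neg Q hQne
      have := N_nonpos G
      rw [← hNQ] at *
      rw [← hNG] at *
      linarith [N_neg Q hQne, N_nonpos G]
    · push_neg at hBex
      have hH0 : H = 0 := by
        rw [hH]
        refine Finset.sum_eq_zero fun i _ => ?_
        rw [hBex i, Polynomial.C_0, zero_mul]
      have hJ0 : J = 0 := by
        rw [← hJint, hH0]
        simp
      have hQ0 : Q = 0 := by rw [hQdef, hH0, hJ0]; simp
      have hNQ0 : NQ = 0 := by
        rw [hNQ, hQ0]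
        simp
      -- some odd coefficient is nonzero
      have hAex : ∃ i, A i ≠ 0 := by
        obtain ⟨k, hk⟩ := Function.ne_iff.mp hx
        rcases Nat.even_or_odd k.val with he | ho
        · exfalso
          obtain ⟨c, hc⟩ := he
          have hklt : k.val / 2 < n := by have := k.isLt; omega
          have hfk : (⟨2 * (k.val / 2), by have := k.isLt; omega⟩ : Fin (2 * n)) = k :=
            Fin.ext (by simp only []; omega)
          have hxb : B ⟨k.val / 2, hklt⟩ = x k := congrArg x hfk
          rw [hBex ⟨k.val / 2, hklt⟩] at hxb
          exact hk hxb.symm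
        · obtain ⟨c, hc⟩ := ho
          have hklt : k.val / 2 < n := by have := k.isLt; omega
          refine ⟨⟨k.val / 2, hklt⟩, ?_⟩
          have hfk : (⟨2 * (k.val / 2) + 1, by have := k.isLt; omega⟩ : Fin (2 * n)) = k :=
            Fin.ext (by simp only []; omega)
          have hxa : A ⟨k.val / 2, hklt⟩ = x k := congrArg x hfk
          rw [hxa]
          exact fun h => hk (by simpa using h)
      have hGne : G ≠ 0 := comb_ne_zero A dA hdAmono hAex
      have := N_neg G hGne
      rw [← hNG] at this
      linarith
  -- expansions into S-sums
  have hNG_S : NG = ∑ i : Fin n, ∑ j : Fin n, A i * A j * S (dA i) (dA j) := by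
    rw [← expand_int A dA A dA, hNG]
    congr 1
    funext t
    rw [hg t]; ring
  have hNH_S : NH = ∑ i : Fin n, ∑ j : Fin n, B i * B j * S (dB i) (dB j) := by
    rw [← expand_int B dB B dB, hNH]
    congr 1
    funext t
    rw [hh t]; ring
  have hJ_S : J = ∑ i : Fin n, B i * S (dB i) 0 := by
    rw [← expand_int1 B dB, hJ]
  have hJ2_S : J ^ 2 = ∑ i : Fin n, ∑ j : Fin n, B i * B j * (S (dB i) 0 * S (dB j) 0) := by
    rw [hJ_S, pow_two, Finset.sum_mul_sum]
    exact Finset.sum_congr rfl fun i _ => Finset.sum_congr rfl fun j _ => by ring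
  -- part 1
  have part1 : (∫ ξ in Set.Iic (0 : ℝ),
      ξ * ((∑ i : Fin n, A i * He (dA i) ξ) ^ 2 +
           (∑ i : Fin n, B i * He (dB i) ξ) ^ 2) * Real.exp (-ξ ^ 2 / 2)) + J ^ 2 < 0 := by
    rw [h_split]
    have : NG + NH + J ^ 2 = NG + NQ := by rw [hNQ_eq]; ring
    linarith [hkey, this.le]
  -- part 2 : the matrix quadratic form equals the same expression
  have hmv : x ⬝ᵥ (Tb n) *ᵥ x = ∑ i, ∑ j, x i * (Tb n i j * x j) := by
    simp only [dotProduct, Matrix.mulVec, Finset.mul_sum]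
  have hTb_oo : ∀ a b : Fin n, Tb n ⟨2 * a.val + 1, by have := a.isLt; omega⟩
      ⟨2 * b.val + 1, by have := b.isLt; omega⟩ = S (2 * a.val) (2 * b.val) := by
    intro a b
    simp only [Tb, Matrix.of_apply]
    rw [if_pos (by omega)]
    congr 1 <;> omega
  have hTb_ee : ∀ a b : Fin n, Tb n ⟨2 * a.val, by have := a.isLt; omega⟩
      ⟨2 * b.val, by have := b.isLt; omega⟩
      = S (2 * a.val + 2) (2 * b.val + 2) + S (2 * a.val + 2) 0 * S 0 (2 * b.val + 2) := by
    intro a b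
    simp only [Tb, Matrix.of_apply]
    rw [if_neg (by omega), if_pos (by omega), S00]
    ring
  have hTb_eo : ∀ a b : Fin n, Tb n ⟨2 * a.val, by have := a.isLt; omega⟩
      ⟨2 * b.val + 1, by have := b.isLt; omega⟩ = 0 := by
    intro a b
    simp only [Tb, Matrix.of_apply]
    rw [if_neg (by omega), if_neg (by omega)]
  have hTb_oe : ∀ a b : Fin n, Tb n ⟨2 * a.val + 1, by have := a.isLt; omega⟩
      ⟨2 * b.val, by have := b.isLt; omega⟩ = 0 := by
    intro a b
    simp only [Tb, Matrix.of_apply]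
    rw [if_neg (by omega), if_neg (by omega)]
  have hquad : x ⬝ᵥ (Tb n) *ᵥ x
      = (∑ i : Fin n, ∑ j : Fin n, A i * A j * S (dA i) (dA j))
        + ((∑ i : Fin n, ∑ j : Fin n, B i * B j * S (dB i) (dB j))
          + ∑ i : Fin n, ∑ j : Fin n, B i * B j * (S (dB i) 0 * S (dB j) 0)) := by
    rw [hmv, fin_sum_parity n (fun i => ∑ j, x i * (Tb n i j * x j))]
    have heven : ∀ a : Fin n,
        (∑ j, x ⟨2 * a.val, by have := a.isLt; omega⟩
          * (Tb n ⟨2 * a.val, by have := a.isLt; omega⟩ j * x j))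
        = ∑ b : Fin n, (B a * B b * S (dB a) (dB b)
            + B a * B b * (S (dB a) 0 * S (dB b) 0)) := by
      intro a
      rw [fin_sum_parity n (fun j => x ⟨2 * a.val, by have := a.isLt; omega⟩
        * (Tb n ⟨2 * a.val, by have := a.isLt; omega⟩ j * x j))]
      have hz : (∑ b : Fin n, x ⟨2 * a.val, by have := a.isLt; omega⟩
          * (Tb n ⟨2 * a.val, by have := a.isLt; omega⟩ ⟨2 * b.val + 1, by have := b.isLt; omega⟩
            * x ⟨2 * b.val + 1, by have := b.isLt; omega⟩)) = 0 := by
        refine Finset.sum_eq_zero fun b _ => ?_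
        rw [hTb_eo a b]
        ring
      rw [hz, add_zero]
      refine Finset.sum_congr rfl fun b _ => ?_
      rw [hTb_ee a b]
      have h1 : x ⟨2 * a.val, by have := a.isLt; omega⟩ = B a := rfl
      have h2 : x ⟨2 * b.val, by have := b.isLt; omega⟩ = B b := rfl
      rw [h1, h2, S_symm 0 (2 * b.val + 2)]
      have e1 : dB a = 2 * a.val + 2 := by rw [hdB]; ring
      have e2 : dB b = 2 * b.val + 2 := by rw [hdB]; ring
      rw [e1, e2]
      ring
    have hodd : ∀ a : Fin n,
        (∑ j, x ⟨2 * a.val + 1, by have := a.isLt; omega⟩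
          * (Tb n ⟨2 * a.val + 1, by have := a.isLt; omega⟩ j * x j))
        = ∑ b : Fin n, A a * A b * S (dA a) (dA b) := by
      intro a
      rw [fin_sum_parity n (fun j => x ⟨2 * a.val + 1, by have := a.isLt; omega⟩
        * (Tb n ⟨2 * a.val + 1, by have := a.isLt; omega⟩ j * x j))]
      have hz : (∑ b : Fin n, x ⟨2 * a.val + 1, by have := a.isLt; omega⟩
          * (Tb n ⟨2 * a.val + 1, by have := a.isLt; omega⟩ ⟨2 * b.val, by have := b.isLt; omega⟩
            * x ⟨2 * b.val, by have := b.isLt; omega⟩)) = 0 := by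
        refine Finset.sum_eq_zero fun b _ => ?_
        rw [hTb_oe a b]
        ring
      rw [hz, zero_add]
      refine Finset.sum_congr rfl fun b _ => ?_
      rw [hTb_oo a b]
      have h1 : x ⟨2 * a.val + 1, by have := a.isLt; omega⟩ = A a := rfl
      have h2 : x ⟨2 * b.val + 1, by have := b.isLt; omega⟩ = A b := rfl
      rw [h1, h2]
      have e1 : dA a = 2 * a.val := rfl
      have e2 : dA b = 2 * b.val := rfl
      rw [e1, e2]
      ring
    rw [Finset.sum_congr rfl fun a _ => heven a, Finset.sum_congr rfl fun a _ => hodd a]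
    simp only [Finset.sum_add_distrib]
    ring
  constructor
  · exact part1
  · rw [hquad, ← hNG_S, ← hNH_S]
    have hsum : NG + (NH + (J ^ 2)) < 0 := by
      have : NG + NH + J ^ 2 = NG + NQ := by rw [hNQ_eq]; ring
      linarith [hkey]
    rw [← hJ2_S]
    linarith [hsum]
end

section
/- Let A ∈ ℝ^{n×m} with n ≥ m and rank A = m. Then there exist matrices R_even ∈ ℝ^{n×m}, R_odd ∈ ℝ^{m×m}, R_0 ∈ ℝ^{n×(n−m)}, and a diagonal matrix Λ₊ ∈ ℝ^{m×m} with strictly positive diagonal entries, such that the block matrix R = [[R_even, R_0, R_even],[R_odd, 0, −R_odd]] ∈ ℝ^{(n+m)×(n+m)} is orthogonal (RᵀR = I) and M(A)·R = R·Λ where Λ = diag(Λ₊, 0_{n−m}, −Λ₊). -/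
open Matrix

private lemma myFromRows_add {m₁ m₂ n : Type*} (A₁ B₁ : Matrix m₁ n ℝ) (A₂ B₂ : Matrix m₂ n ℝ) :
    Matrix.fromRows A₁ A₂ + Matrix.fromRows B₁ B₂ = Matrix.fromRows (A₁ + B₁) (A₂ + B₂) := by
  ext (_ | _) _ <;> simp

private lemma myFromColumns_add {m n₁ n₂ : Type*} (A₁ B₁ : Matrix m n₁ ℝ) (A₂ B₂ : Matrix m n₂ ℝ) :
    Matrix.fromCols A₁ A₂ + Matrix.fromCols B₁ B₂ =
      Matrix.fromCols (A₁ + B₁) (A₂ + B₂) := by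
  ext _ (_ | _) <;> simp

private lemma myFromRows_neg {m₁ m₂ n : Type*} (A₁ : Matrix m₁ n ℝ) (A₂ : Matrix m₂ n ℝ) :
    -Matrix.fromRows A₁ A₂ = Matrix.fromRows (-A₁) (-A₂) := by
  ext (_ | _) _ <;> simp

private lemma myHalf (k : ℕ) :
    (2⁻¹ : ℝ) • (1 : Matrix (Fin k) (Fin k) ℝ) + (2⁻¹ : ℝ) • 1 = 1 := by
  rw [← add_smul]; norm_num

/-- The symmetric block matrix `M(A) = [[0, A],[Aᵀ, 0]]`. -/
def MA {n m : ℕ} (A : Matrix (Fin n) (Fin m) ℝ) :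
    Matrix (Fin n ⊕ Fin m) (Fin n ⊕ Fin m) ℝ :=
  Matrix.fromBlocks 0 A Aᵀ 0

theorem MA_orthogonal_diagonalization (n m : ℕ) (hnm : m ≤ n)
    (A : Matrix (Fin n) (Fin m) ℝ) (hrank : A.rank = m) :
    ∃ (Reven : Matrix (Fin n) (Fin m) ℝ) (Rodd : Matrix (Fin m) (Fin m) ℝ)
      (R0 : Matrix (Fin n) (Fin (n - m)) ℝ) (d : Fin m → ℝ),
      (∀ i, 0 < d i) ∧
      (let R : Matrix (Fin n ⊕ Fin m) ((Fin m ⊕ Fin (n - m)) ⊕ Fin m) ℝ :=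
        Matrix.fromRows (Matrix.fromCols (Matrix.fromCols Reven R0) Reven)
          (Matrix.fromCols (Matrix.fromCols Rodd 0) (-Rodd))
       Rᵀ * R = 1 ∧
        MA A * R =
          R * Matrix.fromBlocks (Matrix.fromBlocks (Matrix.diagonal d) 0 0 0) 0 0
            (-(Matrix.diagonal d))) := by
  classical
  have hAH : Aᴴ = Aᵀ := Matrix.conjTranspose_eq_transpose_of_trivial A
  set B : Matrix (Fin m) (Fin m) ℝ := Aᵀ * A with hBdef
  have hBh : B.IsHermitian := by
    rw [hBdef, ← hAH]; exact Matrix.isHermitian_conjTranspose_mul_self A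
  have hPSD : B.PosSemidef := by
    rw [hBdef, ← hAH]; exact Matrix.posSemidef_conjTranspose_mul_self A
  have hrankB : B.rank = m := by
    rw [hBdef, Matrix.rank_transpose_mul_self, hrank]
  set μ : Fin m → ℝ := hBh.eigenvalues with hμdef
  have hnn : ∀ i, 0 ≤ μ i := hPSD.eigenvalues_nonneg
  have hne : ∀ i, μ i ≠ 0 := by
    intro i h0
    have hc := hBh.rank_eq_card_non_zero_eigs
    have hlt : Fintype.card {j // hBh.eigenvalues j ≠ 0} < Fintype.card (Fin m) :=
      Fintype.card_subtype_lt (x := i) (by simpa [hμdef] using h0)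
    rw [hrankB] at hc
    rw [Fintype.card_fin] at hlt
    omega
  set d : Fin m → ℝ := fun i => Real.sqrt (μ i) with hddef
  have hd : ∀ i, 0 < d i := fun i =>
    Real.sqrt_pos.2 (lt_of_le_of_ne (hnn i) (Ne.symm (hne i)))
  have hdsq : ∀ i, d i * d i = μ i := fun i => Real.mul_self_sqrt (hnn i)
  set U : Matrix (Fin m) (Fin m) ℝ := (hBh.eigenvectorUnitary : Matrix (Fin m) (Fin m) ℝ)
    with hUdef
  have hsU : star U = Uᵀ := by
    rw [Matrix.star_eq_conjTranspose, Matrix.conjTranspose_eq_transpose_of_trivial]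
  have hU1 : Uᵀ * U = 1 := by
    rw [← hsU]; exact (Matrix.mem_unitaryGroup_iff'.mp hBh.eigenvectorUnitary.2)
  have hUBU : Uᵀ * B * U = Matrix.diagonal μ := by
    have h := hBh.conjStarAlgAut_star_eigenvectorUnitary
    simp only [Unitary.conjStarAlgAut_star_apply, Unitary.coe_star, ← hUdef, hsU] at h
    simpa [RCLike.ofReal_real_eq_id] using h
  have hBU : B * U = U * Matrix.diagonal μ := by
    have h := hBh.spectral_theorem
    simp only [Unitary.conjStarAlgAut_apply, Unitary.coe_star, ← hUdef, hsU] at h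
    simp only [RCLike.ofReal_real_eq_id, Function.comp_id, Function.id_comp] at h
    calc B * U = U * Matrix.diagonal μ * Uᵀ * U := by rw [← h]
    _ = U * Matrix.diagonal μ * (Uᵀ * U) := by rw [Matrix.mul_assoc]
    _ = U * Matrix.diagonal μ := by rw [hU1, Matrix.mul_one]
  set Dinv : Matrix (Fin m) (Fin m) ℝ := Matrix.diagonal (fun i => (d i)⁻¹) with hDinvdef
  set Dh : Matrix (Fin m) (Fin m) ℝ := Matrix.diagonal d with hDhdef
  have hDinvT : Dinvᵀ = Dinv := by rw [hDinvdef, Matrix.diagonal_transpose]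
  have hDinvDh : Dinv * Dh = 1 := by
    rw [hDinvdef, hDhdef, Matrix.diagonal_mul_diagonal]
    have : (fun i => (d i)⁻¹ * d i) = fun _ : Fin m => (1 : ℝ) :=
      funext fun i => inv_mul_cancel₀ (hd i).ne'
    rw [this, Matrix.diagonal_one]
  have hDhDinv : Dh * Dinv = 1 := by
    rw [hDhdef, hDinvdef, Matrix.diagonal_mul_diagonal]
    have : (fun i => d i * (d i)⁻¹) = fun _ : Fin m => (1 : ℝ) :=
      funext fun i => mul_inv_cancel₀ (hd i).ne'
    rw [this, Matrix.diagonal_one]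
  have hDmulDinv : Matrix.diagonal μ * Dinv = Dh := by
    rw [hDinvdef, hDhdef, Matrix.diagonal_mul_diagonal]
    have : (fun i => μ i * (d i)⁻¹) = d := by
      funext i
      rw [← hdsq i]
      field_simp
    rw [this]
  have hDinvDDinv : Dinv * Matrix.diagonal μ * Dinv = 1 := by
    rw [Matrix.mul_assoc, hDmulDinv, hDinvDh]
  set c : ℝ := (Real.sqrt 2)⁻¹ with hcdef
  have hc2 : c * c = 2⁻¹ := by
    rw [hcdef, ← mul_inv]
    norm_num [Real.mul_self_sqrt]
  set Rodd : Matrix (Fin m) (Fin m) ℝ := c • U with hRodddef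
  set Reven : Matrix (Fin n) (Fin m) ℝ := c • (A * U * Dinv) with hRevendef
  -- kernel part
  set K : Submodule ℝ (EuclideanSpace ℝ (Fin n)) := LinearMap.ker (Matrix.toEuclideanLin Aᵀ)
    with hKdef
  have hrankAT : Aᵀ.rank = m := by rw [Matrix.rank_transpose, hrank]
  have hrange : Module.finrank ℝ (LinearMap.range (Matrix.toEuclideanLin Aᵀ)) = m := by
    have h := Matrix.rank_eq_finrank_range_toLin Aᵀ (PiLp.basisFun 2 ℝ (Fin m))
      (PiLp.basisFun 2 ℝ (Fin n))
    rw [hrankAT] at h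
    rw [Matrix.toEuclideanLin_eq_toLin]
    exact h.symm
  have hker : Module.finrank ℝ K = n - m := by
    rw [hKdef]
    have h := LinearMap.finrank_range_add_finrank_ker (Matrix.toEuclideanLin Aᵀ)
    rw [hrange, finrank_euclideanSpace_fin] at h
    omega
  set b : OrthonormalBasis (Fin (n - m)) ℝ K :=
    (stdOrthonormalBasis ℝ K).reindex (finCongr hker) with hbdef
  set R0 : Matrix (Fin n) (Fin (n - m)) ℝ :=
    Matrix.of (fun i j => (b j : EuclideanSpace ℝ (Fin n)) i) with hR0def
  -- E7
  have e7 : Aᵀ * R0 = 0 := by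
    ext i j
    have hb : Matrix.toEuclideanLin Aᵀ (b j : EuclideanSpace ℝ (Fin n)) = 0 := (b j).2
    have h := congrArg (fun v => WithLp.equiv 2 (Fin m → ℝ) v i) hb
    simp only [Matrix.toEuclideanLin_apply] at h
    simpa [Matrix.mul_apply, Matrix.mulVec, dotProduct, hR0def] using h
  -- E4
  have e4 : R0ᵀ * R0 = 1 := by
    ext j k
    have h := orthonormal_iff_ite.mp b.orthonormal j k
    rw [Submodule.coe_inner] at h
    simp only [PiLp.inner_apply, RCLike.inner_apply, starRingEnd_apply, star_trivial] at h
    simp only [Matrix.mul_apply, Matrix.one_apply, hR0def, Matrix.transpose_apply, Matrix.of_apply]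
    exact (Finset.sum_congr rfl fun _ _ => mul_comm _ _).trans h
  -- E3
  have e3 : Revenᵀ * R0 = 0 := by
    rw [hRevendef, Matrix.transpose_smul, Matrix.transpose_mul, Matrix.transpose_mul,
      hDinvT, Matrix.smul_mul, Matrix.mul_assoc, Matrix.mul_assoc, e7]
    simp
  have e3' : R0ᵀ * Reven = 0 := by
    have h := congrArg Matrix.transpose e3
    simpa [Matrix.transpose_mul] using h
  -- middle identity
  have hmid : Uᵀ * Aᵀ * (A * U) = Matrix.diagonal μ := by
    calc Uᵀ * Aᵀ * (A * U) = Uᵀ * (Aᵀ * A) * U := by simp only [Matrix.mul_assoc]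
    _ = Matrix.diagonal μ := by rw [← hBdef, hUBU]
  -- E1
  have e1 : Revenᵀ * Reven = (2⁻¹ : ℝ) • (1 : Matrix (Fin m) (Fin m) ℝ) := by
    rw [hRevendef, Matrix.transpose_smul, Matrix.transpose_mul, Matrix.transpose_mul,
      hDinvT, Matrix.smul_mul, Matrix.mul_smul, smul_smul, hc2]
    congr 1
    calc Dinv * (Uᵀ * Aᵀ) * (A * U * Dinv)
        = Dinv * (Uᵀ * Aᵀ * (A * U)) * Dinv := by simp only [Matrix.mul_assoc]
      _ = Dinv * Matrix.diagonal μ * Dinv := by rw [hmid]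
      _ = 1 := hDinvDDinv
  -- E2
  have e2 : Roddᵀ * Rodd = (2⁻¹ : ℝ) • (1 : Matrix (Fin m) (Fin m) ℝ) := by
    rw [hRodddef, Matrix.transpose_smul, Matrix.smul_mul, Matrix.mul_smul, smul_smul, hc2,
      hU1]
  -- E5
  have e5 : A * Rodd = Reven * Dh := by
    rw [hRodddef, hRevendef, Matrix.mul_smul, Matrix.smul_mul]
    congr 1
    rw [Matrix.mul_assoc, Matrix.mul_assoc, hDinvDh, Matrix.mul_one]
  -- E6
  have e6 : Aᵀ * Reven = Rodd * Dh := by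
    rw [hRodddef, hRevendef, Matrix.mul_smul, Matrix.smul_mul]
    congr 1
    calc Aᵀ * (A * U * Dinv) = (Aᵀ * A) * U * Dinv := by simp only [Matrix.mul_assoc]
      _ = U * Matrix.diagonal μ * Dinv := by rw [← hBdef, hBU]
      _ = U * Dh := by rw [Matrix.mul_assoc, hDmulDinv]
  refine ⟨Reven, Rodd, R0, d, hd, ?_, ?_⟩
  · -- orthogonality
    show (Matrix.fromRows (Matrix.fromCols (Matrix.fromCols Reven R0) Reven)
        (Matrix.fromCols (Matrix.fromCols Rodd 0) (-Rodd)))ᵀ *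
      (Matrix.fromRows (Matrix.fromCols (Matrix.fromCols Reven R0) Reven)
        (Matrix.fromCols (Matrix.fromCols Rodd 0) (-Rodd))) = 1
    rw [Matrix.transpose_fromRows, Matrix.transpose_fromCols, Matrix.transpose_fromCols,
      Matrix.transpose_fromCols, Matrix.fromCols_mul_fromRows]
    simp only [Matrix.fromRows_mul_fromCols, Matrix.fromRows_mul, Matrix.mul_fromCols,
      Matrix.transpose_neg, Matrix.neg_mul, Matrix.mul_neg, neg_neg,
      Matrix.transpose_fromCols, Matrix.transpose_fromRows,
      e1, e2, e3, e3', e4, Matrix.transpose_zero, Matrix.zero_mul, Matrix.mul_zero,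
      Matrix.fromBlocks_add, myFromRows_add, myFromColumns_add, add_zero, zero_add,
      neg_neg, add_neg_cancel, neg_add_cancel, myFromRows_neg, neg_zero, myHalf]
    ext ((i | i) | i) ((j | j) | j) <;>
      simp [Matrix.one_apply, Sum.inl.injEq, Sum.inr.injEq]
  · -- eigen equation
    rw [MA, Matrix.fromBlocks_mul_fromRows]
    erw [Matrix.fromRows_mul]
    rw [Matrix.fromCols_mul_fromBlocks,
      Matrix.fromCols_mul_fromBlocks, Matrix.fromCols_mul_fromBlocks,
      Matrix.fromCols_mul_fromBlocks]
    simp only [Matrix.mul_fromCols, Matrix.mul_zero, Matrix.zero_mul, Matrix.mul_neg,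
      Matrix.neg_mul, neg_neg, Matrix.mul_one, add_zero, zero_add,
      e5, e6, e7, ← hDhdef]
end
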